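/- Let μ(∞) > 0, λ(∞) > 0, and let ξ be an integrable real random variable with ξ ≤ 0 almost surely, P(ξ = 0) < 1, and E[ξ] + μ(∞)/λ(∞) < 0. Then the function φ(w) := E[e^{wξ}] − 1 + wμ(∞)/λ(∞) has a unique zero w > 0. -/

import Mathlib

open MeasureTheory

/-- If `μ∞ > 0`, `λ∞ > 0` and `ξ` is integrable, nonpositive a.s., not a.s. zero,
with `E[ξ] + μ∞/λ∞ < 0`, then `φ(w) = E[e^{wξ}] - 1 + wμ∞/λ∞` has a unique
positive zero. -/
theorem lundberg_root_exists_unique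
    {Ω : Type*} [MeasureSpace Ω] (μ : Measure Ω) [IsProbabilityMeasure μ]
    (muInf lamInf : ℝ) (hmu : 0 < muInf) (hlam : 0 < lamInf)
    (ξ : Ω → ℝ) (hint : Integrable ξ μ) (hneg : ∀ᵐ ω ∂μ, ξ ω ≤ 0)
    (hnz : μ {ω | ξ ω = 0} < 1)
    (hdrift : (∫ ω, ξ ω ∂μ) + muInf / lamInf < 0) :
    ∃! w : ℝ, 0 < w ∧
      (∫ ω, Real.exp (w * ξ ω) ∂μ) - 1 + w * muInf / lamInf = 0 := by
  set G : ℝ → ℝ := fun w => ∫ ω, Real.exp (w * ξ ω) ∂μ with hG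
  set Φ : ℝ → ℝ := fun w => G w - 1 + w * muInf / lamInf with hΦdef
  -- measurability
  have hmeas : ∀ w : ℝ, AEStronglyMeasurable (fun ω => Real.exp (w * ξ ω)) μ := by
    intro w
    exact (Real.continuous_exp.comp (continuous_const.mul continuous_id)).comp_aestronglyMeasurable
      hint.1
  -- integrability for w ≥ 0
  have hI : ∀ w : ℝ, 0 ≤ w → Integrable (fun ω => Real.exp (w * ξ ω)) μ := by
    intro w hw
    refine Integrable.mono' (integrable_const 1) (hmeas w) ?_
    filter_upwards [hneg] with ω hω
    rw [Real.norm_eq_abs, abs_of_pos (Real.exp_pos _)]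
    exact Real.exp_le_one_iff.2 (mul_nonpos_of_nonneg_of_nonpos hw hω)
  -- convexity inequality for G
  have hconvG : ∀ x y a b : ℝ, 0 ≤ x → 0 ≤ y → 0 ≤ a → 0 ≤ b → a + b = 1 →
      G (a * x + b * y) ≤ a * G x + b * G y := by
    intro x y a b hx hy ha hb hab
    have hxy : 0 ≤ a * x + b * y := by positivity
    have hpt : ∀ ω, Real.exp ((a * x + b * y) * ξ ω)
        ≤ a * Real.exp (x * ξ ω) + b * Real.exp (y * ξ ω) := by
      intro ω
      have h := convexOn_exp.2 (Set.mem_univ (x * ξ ω)) (Set.mem_univ (y * ξ ω)) ha hb hab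
      have he : (a * x + b * y) * ξ ω = a • (x * ξ ω) + b • (y * ξ ω) := by
        simp [smul_eq_mul]; ring
      rw [he]
      simpa [smul_eq_mul] using h
    calc G (a * x + b * y)
        ≤ ∫ ω, (a * Real.exp (x * ξ ω) + b * Real.exp (y * ξ ω)) ∂μ := by
          exact integral_mono (hI _ hxy) (((hI x hx).const_mul a).add ((hI y hy).const_mul b)) hpt
      _ = a * G x + b * G y := by
          rw [integral_add ((hI x hx).const_mul a) ((hI y hy).const_mul b),
            integral_const_mul, integral_const_mul]
  -- Φ is eventually negative just right of 0
  have hsmall : ∀ᶠ w in nhdsWithin 0 (Set.Ioi (0:ℝ)), Φ w < 0 := by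
    have habs : Integrable (fun ω => |ξ ω|) μ := hint.abs
    have htend : Filter.Tendsto (fun w => ∫ ω, (Real.exp (w * ξ ω) - 1) / w ∂μ)
        (nhdsWithin 0 (Set.Ioi (0:ℝ))) (nhds (∫ ω, ξ ω ∂μ)) := by
      apply tendsto_integral_filter_of_dominated_convergence (fun ω => |ξ ω|)
      · filter_upwards with w
        simp only [div_eq_mul_inv]
        exact ((hmeas w).sub aestronglyMeasurable_const).mul_const w⁻¹
      · filter_upwards [self_mem_nhdsWithin] with w (hw : 0 < w)
        filter_upwards [hneg] with ω hω
        have hwx : w * ξ ω ≤ 0 := mul_nonpos_of_nonneg_of_nonpos hw.le hω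
        have h1 : Real.exp (w * ξ ω) ≤ 1 := Real.exp_le_one_iff.2 hwx
        have h2 : 1 + w * ξ ω ≤ Real.exp (w * ξ ω) := Real.add_one_le_exp _ |>.trans_eq' (by ring)
        rw [Real.norm_eq_abs, abs_div, abs_of_pos hw, div_le_iff₀ hw]
        rw [abs_of_nonpos (by linarith)]
        have : |ξ ω| = -ξ ω := abs_of_nonpos hω
        nlinarith
      · exact habs
      · filter_upwards with ω
        have h1 : HasDerivAt (fun w : ℝ => w * ξ ω) (ξ ω) 0 := hasDerivAt_mul_const (ξ ω)
        have h2 : HasDerivAt (fun w : ℝ => Real.exp (w * ξ ω)) (Real.exp (0 * ξ ω) * ξ ω) 0 :=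
          h1.exp
        have h3 := hasDerivAt_iff_tendsto_slope.1 h2
        have h4 : Filter.Tendsto (slope (fun w : ℝ => Real.exp (w * ξ ω)) 0)
            (nhdsWithin 0 (Set.Ioi (0:ℝ))) (nhds (Real.exp (0 * ξ ω) * ξ ω)) :=
          h3.mono_left (nhdsWithin_mono 0 (fun z hz => ne_of_gt hz))
        have heq : ∀ w : ℝ, slope (fun w : ℝ => Real.exp (w * ξ ω)) 0 w
            = (Real.exp (w * ξ ω) - 1) / w := by
          intro w
          simp [slope, div_eq_inv_mul]
        rw [show Real.exp (0 * ξ ω) * ξ ω = ξ ω by simp]  at h4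
        exact h4.congr heq
    have htend2 : Filter.Tendsto (fun w => (∫ ω, (Real.exp (w * ξ ω) - 1) / w ∂μ) + muInf / lamInf)
        (nhdsWithin 0 (Set.Ioi (0:ℝ))) (nhds ((∫ ω, ξ ω ∂μ) + muInf / lamInf)) :=
      htend.add tendsto_const_nhds
    have hev := htend2.eventually_lt_const hdrift
    filter_upwards [hev, self_mem_nhdsWithin] with w hw (hwpos : 0 < w)
    have hrw : ∫ ω, (Real.exp (w * ξ ω) - 1) / w ∂μ = (G w - 1) / w := by
      rw [hG]
      rw [integral_div, integral_sub (hI w hwpos.le) (integrable_const 1)]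
      simp [measure_univ]
    rw [hrw] at hw
    have : Φ w = w * ((G w - 1) / w + muInf / lamInf) := by
      simp only [hΦdef]
      field_simp
    rw [this]
    exact mul_neg_of_pos_of_neg hwpos hw
  -- pick w₀ > 0 with Φ w₀ < 0
  obtain ⟨w₀, hw₀, hw₀pos⟩ := (hsmall.and self_mem_nhdsWithin).exists
  have hw₀pos : 0 < w₀ := hw₀pos
  -- big M with Φ M > 0
  set M : ℝ := max (w₀ + 1) (lamInf / muInf + 1) with hM
  have hMw₀ : w₀ < M := lt_of_lt_of_le (by linarith) (le_max_left _ _)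
  have hMpos : 0 < M := hw₀pos.trans hMw₀
  have hΦM : 0 < Φ M := by
    have hGnn : 0 ≤ G M := integral_nonneg fun ω => (Real.exp_pos _).le
    have hMbig : lamInf / muInf + 1 ≤ M := le_max_right _ _
    have h1 : 1 < M * muInf / lamInf := by
      rw [lt_div_iff₀ hlam]
      have := (div_le_iff₀ hmu).1 (by linarith : lamInf / muInf ≤ M - 1)
      nlinarith
    simp only [hΦdef]
    linarith
  -- continuity on [w₀, M]
  have hcont : ContinuousOn Φ (Set.Icc w₀ M) := by
    have hcG : ∀ w ∈ Set.Icc w₀ M, ContinuousAt G w := by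
      intro w hw
      have hwpos : 0 < w := lt_of_lt_of_le hw₀pos hw.1
      apply continuousAt_of_dominated (bound := fun _ => (1:ℝ))
      · filter_upwards with w'; exact hmeas w'
      · filter_upwards [eventually_nhds_iff.2 ⟨Set.Ioi 0, fun z hz => hz, isOpen_Ioi, hwpos⟩]
          with w' (hw' : (0:ℝ) < w')
        filter_upwards [hneg] with ω hω
        rw [Real.norm_eq_abs, abs_of_pos (Real.exp_pos _)]
        exact Real.exp_le_one_iff.2 (mul_nonpos_of_nonneg_of_nonpos hw'.le hω)
      · exact integrable_const 1
      · filter_upwards with ω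
        exact (Real.continuous_exp.comp (continuous_id.mul continuous_const)).continuousAt
    have : ContinuousOn G (Set.Icc w₀ M) := fun w hw => (hcG w hw).continuousWithinAt
    exact (this.sub continuousOn_const).add
      (((continuousOn_id.mul continuousOn_const)).div_const lamInf)
  -- existence of a root in (w₀, M)
  have hivt := intermediate_value_Ioo (le_of_lt hMw₀) hcont
  have h0mem : (0:ℝ) ∈ Set.Ioo (Φ w₀) (Φ M) := ⟨hw₀, hΦM⟩
  obtain ⟨c, hc, hΦc⟩ := hivt h0mem
  have hcpos : 0 < c := hw₀pos.trans hc.1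
  refine ⟨c, ⟨hcpos, hΦc⟩, ?_⟩
  -- uniqueness: any two positive roots coincide
  have key : ∀ u v : ℝ, 0 < u → Φ u = 0 → 0 < v → Φ v = 0 → u < v → False := by
    intro u v hu hΦu hv hΦv huv
    obtain ⟨ε, hεneg, hε⟩ := (hsmall.and (Ioo_mem_nhdsGT_of_mem (by exact ⟨le_refl 0, hu⟩))).exists
    obtain ⟨hε0, hεu⟩ := hε
    set a : ℝ := (v - u) / (v - ε) with ha
    set b : ℝ := (u - ε) / (v - ε) with hb
    have hvε : 0 < v - ε := by linarith
    have ha0 : 0 < a := div_pos (by linarith) hvε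
    have hb0 : 0 < b := div_pos (by linarith) hvε
    have hab : a + b = 1 := by rw [ha, hb]; field_simp; ring
    have hcomb : a * ε + b * v = u := by rw [ha, hb]; field_simp; ring
    have hGle : G u ≤ a * G ε + b * G v := by
      have := hconvG ε v a b hε0.le hv.le ha0.le hb0.le hab
      rwa [hcomb] at this
    -- affine part is exact
    have haff : u * muInf / lamInf = a * (ε * muInf / lamInf) + b * (v * muInf / lamInf) := by
      rw [← hcomb]; field_simp
    have hΦle : Φ u ≤ a * Φ ε + b * Φ v := by
      simp only [hΦdef]
      have h1 : a * (G ε - 1 + ε * muInf / lamInf) + b * (G v - 1 + v * muInf / lamInf)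
          = a * G ε + b * G v - (a + b) + (a * (ε * muInf / lamInf)
            + b * (v * muInf / lamInf)) := by ring
      rw [h1, hab, ← haff]
      linarith
    rw [hΦu, hΦv] at hΦle
    nlinarith
  intro y hy
  rcases lt_trichotomy y c with h | h | h
  · exact absurd (key y c hy.1 hy.2 hcpos hΦc h) not_false
  · exact h
  · exact absurd (key c y hcpos hΦc hy.1 hy.2 h) not_false
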